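/- arXiv:2408.09203 — 2 statements merged into one kernel-verified Lean document; each statement's English description precedes it below -/
import Mathlib

section
/- Let G be a group and let p, v : ℤ → G satisfy v(i)*p(i) = p(i)*v(i) = 1 for all i. Assume that for all a, b, c, p(c)*v(b)*p(a)*v(c)*p(b)*v(a) = 1. Then for all a, b, c, d, the elements p(d)*v(c) and p(b)*v(a) commute: (p(d)*v(c))*(p(b)*v(a)) = (p(b)*v(a))*(p(d)*v(c)). -/
theorem theoremB_commute {G : Type*} [Group G] (p v : ℤ → G)
    (h1 : ∀ i, v i * p i = 1) (h2 : ∀ i, p i * v i = 1)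
    (hA : ∀ a b c : ℤ, p c * v b * p a * v c * p b * v a = 1) (a b c d : ℤ) :
    (p d * v c) * (p b * v a) = (p b * v a) * (p d * v c) := by
  have hv : ∀ i, v i = (p i)⁻¹ := fun i => eq_inv_of_mul_eq_one_left (h1 i)
  have key : ∀ x y z : ℤ, p z * (p y)⁻¹ * p x = p x * (p y)⁻¹ * p z := by
    intro x y z
    have h := hA x y z
    rw [hv, hv, hv] at h
    have h' : (p z * (p y)⁻¹ * p x) * ((p z)⁻¹ * p y * (p x)⁻¹) = 1 := by
      simpa [mul_assoc] using h
    have h'' := eq_inv_of_mul_eq_one_left h'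
    rw [h'']; group
  have key' : ∀ x y z : ℤ, (p x)⁻¹ * p y * (p z)⁻¹ = (p z)⁻¹ * p y * (p x)⁻¹ := by
    intro x y z
    have := congrArg (·⁻¹) (key z y x)
    simpa [mul_assoc] using this.symm
  simp only [hv]
  calc p d * (p c)⁻¹ * (p b * (p a)⁻¹)
      = p d * ((p c)⁻¹ * p b * (p a)⁻¹) := by simp [mul_assoc]
    _ = p d * ((p a)⁻¹ * p b * (p c)⁻¹) := by rw [key']
    _ = (p d * (p a)⁻¹ * p b) * (p c)⁻¹ := by simp [mul_assoc]
    _ = (p b * (p a)⁻¹ * p d) * (p c)⁻¹ := by rw [key]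
    _ = p b * (p a)⁻¹ * (p d * (p c)⁻¹) := by simp [mul_assoc]
end

section
/- Let G be a group and let p, v : ℤ → G satisfy v(i)*p(i) = p(i)*v(i) = 1 for all i. Assume that for all a and b: p(1)*v(b)*p(a) = p(a)*v(b)*p(1) and v(1)*p(b)*v(a) = v(a)*p(b)*v(1). Then for all a, b, c: v(a)*p(b)*v(c) = v(c)*p(b)*v(a). -/
theorem odd_case_theoremA {G : Type*} [Group G] (p v : ℤ → G)
    (h1 : ∀ i, v i * p i = 1) (h2 : ∀ i, p i * v i = 1)
    (hswap1 : ∀ a b : ℤ, p 1 * v b * p a = p a * v b * p 1)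
    (hswap2 : ∀ a b : ℤ, v 1 * p b * v a = v a * p b * v 1) (a b c : ℤ) :
    v a * p b * v c = v c * p b * v a := by
  have hv : ∀ i, v i = (p i)⁻¹ := fun i => eq_inv_of_mul_eq_one_left (h1 i)
  simp only [hv] at hswap2 ⊢
  have hc : ∀ i j : ℤ, Commute ((p i)⁻¹ * p 1) ((p 1)⁻¹ * p j) := by
    intro i j
    have h := hswap2 i j
    show ((p i)⁻¹ * p 1) * ((p 1)⁻¹ * p j) = ((p 1)⁻¹ * p j) * ((p i)⁻¹ * p 1)
    calc ((p i)⁻¹ * p 1) * ((p 1)⁻¹ * p j) = (p i)⁻¹ * p j := by group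
      _ = ((p 1)⁻¹ * p j * (p i)⁻¹) * p 1 := by rw [h]; group
      _ = ((p 1)⁻¹ * p j) * ((p i)⁻¹ * p 1) := by group
  have com' : ∀ i j : ℤ, Commute ((p i)⁻¹ * p 1) ((p j)⁻¹ * p 1) := by
    intro i j
    simpa [mul_inv_rev] using (hc i j).inv_right
  have key : ((p a)⁻¹ * p 1) * ((p 1)⁻¹ * p b) * ((p c)⁻¹ * p 1)
      = ((p c)⁻¹ * p 1) * ((p 1)⁻¹ * p b) * ((p a)⁻¹ * p 1) := by
    rw [(hc a b).eq, mul_assoc, (com' a c).eq, ← mul_assoc, ← (hc c b).eq]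
  refine mul_right_cancel (b := p 1) ?_
  calc (p a)⁻¹ * p b * (p c)⁻¹ * p 1
      = ((p a)⁻¹ * p 1) * ((p 1)⁻¹ * p b) * ((p c)⁻¹ * p 1) := by group
    _ = ((p c)⁻¹ * p 1) * ((p 1)⁻¹ * p b) * ((p a)⁻¹ * p 1) := key
    _ = (p c)⁻¹ * p b * (p a)⁻¹ * p 1 := by group
end
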